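/- arXiv:1701.01461 — 2 statements merged into one kernel-verified Lean document; each statement's English description precedes it below -/
import Mathlib

section
/- Let H be a β-acyclic hypergraph with β-elimination order < and edge order <_H. Let x ≤ y be vertices and e ≤_H f edges such that there is a common vertex z with z ∈ V(H_e^x), z ∈ V(H_f^y), and z ≤ x. Then H_e^x ⊆ H_f^y. -/
variable {V : Type*} [LinearOrder V]

/-- The colexicographic order on edges: `e <_H f` iff `max (e Δ f) ∈ f`. -/
def edgeLT (e f : Finset V) : Prop :=
  ∃ hne : (symmDiff e f).Nonempty, (symmDiff e f).max' hne ∈ f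

def edgeLE (e f : Finset V) : Prop := e = f ∨ edgeLT e f

/-- The linear order on `V` is a β-elimination order for the hypergraph `H`. -/
def IsBetaElim (H : Finset (Finset V)) : Prop :=
  ∀ x : V, ∀ e ∈ H, ∀ f ∈ H, x ∈ e → x ∈ f →
    (e.filter fun y => x < y) ⊆ f ∨ (f.filter fun y => x < y) ⊆ e

/-- A walk starting at edge `e` and continuing through the vertex/edge pairs in `p`. -/
def WalkAux (H : Finset (Finset V)) : Finset V → List (V × Finset V) → Prop
  | _, [] => True
  | e, (x, f) :: p => x ∈ e ∧ x ∈ f ∧ f ∈ H ∧ WalkAux H f p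

def lastEdge (e : Finset V) (p : List (V × Finset V)) : Finset V :=
  (p.map Prod.snd).getLastD e

/-- `p` is a walk from edge `e` to edge `f` in `H`. -/
def IsWalk (H : Finset (Finset V)) (e f : Finset V) (p : List (V × Finset V)) : Prop :=
  e ∈ H ∧ WalkAux H e p ∧ lastEdge e p = f

/-- A path: a walk with pairwise distinct edges and pairwise distinct vertices. -/
def IsPath (H : Finset (Finset V)) (e f : Finset V) (p : List (V × Finset V)) : Prop :=
  IsWalk H e f p ∧ (e :: p.map Prod.snd).Nodup ∧ (p.map Prod.fst).Nodup

/-- `f ∈ H_e^x`: there is a walk from `f` to `e` using only edges `≤_H e` and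
vertices `≤ x`. -/
def memHex (H : Finset (Finset V)) (e : Finset V) (x : V) (f : Finset V) : Prop :=
  ∃ p, IsWalk H f e p ∧ edgeLE f e ∧ ∀ q ∈ p, edgeLE q.2 e ∧ q.1 ≤ x

lemma edgeLT_iff (e f : Finset V) : edgeLT e f ↔ toColex e < toColex f := by
  rw [Finset.Colex.toColex_lt_toColex_iff_max'_mem]
  constructor
  · rintro ⟨hne, hm⟩
    exact ⟨fun h => by subst h; simp [symmDiff_self] at hne, hm⟩
  · rintro ⟨hne, hm⟩
    exact ⟨Finset.symmDiff_nonempty.2 hne, hm⟩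

lemma edgeLE_iff (e f : Finset V) : edgeLE e f ↔ toColex e ≤ toColex f := by
  rw [edgeLE, edgeLT_iff, le_iff_eq_or_lt]
  constructor
  · rintro (h | h); · exact Or.inl (by rw [h])
    · exact Or.inr h
  · rintro (h | h); · exact Or.inl (by simpa [toColex_inj] using h)
    · exact Or.inr h

lemma edgeLE_trans {a b c : Finset V} (h1 : edgeLE a b) (h2 : edgeLE b c) : edgeLE a c := by
  rw [edgeLE_iff] at *; exact le_trans h1 h2

lemma lastEdge_cons (e f : Finset V) (x : V) (p : List (V × Finset V)) :
    lastEdge e ((x, f) :: p) = lastEdge f p := by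
  simp only [lastEdge, List.map_cons, List.getLastD_cons]

lemma lastEdge_append (e : Finset V) (p q : List (V × Finset V)) :
    lastEdge e (p ++ q) = lastEdge (lastEdge e p) q := by
  induction p generalizing e with
  | nil => simp [lastEdge]
  | cons a p ih => obtain ⟨x, f⟩ := a; simp [lastEdge_cons, ih]

lemma walkAux_append {H : Finset (Finset V)} {e : Finset V} {p q : List (V × Finset V)}
    (hp : WalkAux H e p) (hq : WalkAux H (lastEdge e p) q) : WalkAux H e (p ++ q) := by
  induction p generalizing e with
  | nil => simpa [lastEdge] using hq
  | cons a p ih =>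
    obtain ⟨x, f⟩ := a
    obtain ⟨h1, h2, h3, h4⟩ := hp
    rw [lastEdge_cons] at hq
    exact ⟨h1, h2, h3, ih h4 hq⟩

lemma lastEdge_mem {H : Finset (Finset V)} {e : Finset V} {p : List (V × Finset V)}
    (he : e ∈ H) (hp : WalkAux H e p) : lastEdge e p ∈ H := by
  induction p generalizing e with
  | nil => simpa [lastEdge] using he
  | cons a p ih =>
    obtain ⟨x, f⟩ := a
    obtain ⟨_, _, h3, h4⟩ := hp
    rw [lastEdge_cons]; exact ih h3 h4

/-- Reverse a walk starting at `e`. -/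
def revW : Finset V → List (V × Finset V) → List (V × Finset V)
  | _, [] => []
  | e, (x, f) :: p => revW f p ++ [(x, e)]

lemma revW_walk {H : Finset (Finset V)} {e : Finset V} (p : List (V × Finset V))
    (he : e ∈ H) (hp : WalkAux H e p) :
    WalkAux H (lastEdge e p) (revW e p) ∧ lastEdge (lastEdge e p) (revW e p) = e := by
  induction p generalizing e with
  | nil => exact ⟨trivial, rfl⟩
  | cons a p ih =>
    obtain ⟨x, f⟩ := a
    obtain ⟨h1, h2, h3, h4⟩ := hp
    obtain ⟨ihw, ihl⟩ := ih h3 h4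
    rw [lastEdge_cons, revW]
    constructor
    · exact walkAux_append ihw (by rw [ihl]; exact ⟨h2, h1, he, trivial⟩)
    · rw [lastEdge_append, ihl]; simp [lastEdge]

lemma revW_mem {e : Finset V} (p : List (V × Finset V)) :
    ∀ q ∈ revW e p, (q.1 ∈ p.map Prod.fst) ∧ (q.2 = e ∨ q.2 ∈ p.map Prod.snd) := by
  induction p generalizing e with
  | nil => simp [revW]
  | cons a p ih =>
    obtain ⟨x, f⟩ := a
    intro q hq
    rw [revW, List.mem_append] at hq
    rcases hq with hq | hq
    · obtain ⟨h1, h2⟩ := ih q hq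
      refine ⟨by simp [h1], ?_⟩
      rcases h2 with h2 | h2
      · exact Or.inr (by simp [h2])
      · exact Or.inr (by simp; right; simpa using h2)
    · simp at hq
      rw [hq]; simp

theorem hex_inclusion {V : Type*} [LinearOrder V] (H : Finset (Finset V))
    (hβ : IsBetaElim H) (x y : V) (hxy : x ≤ y) (e f : Finset V)
    (he : e ∈ H) (hf : f ∈ H) (hef : edgeLE e f) (z : V)
    (hz1 : ∃ g, memHex H e x g ∧ z ∈ g)
    (hz2 : ∃ g, memHex H f y g ∧ z ∈ g)
    (hzx : z ≤ x) :
    ∀ g, memHex H e x g → memHex H f y g := by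
  obtain ⟨g₁, ⟨p₁, ⟨hg₁H, hw₁, hl₁⟩, hg₁e, hb₁⟩, hzg₁⟩ := hz1
  obtain ⟨g₂, ⟨p₂, ⟨hg₂H, hw₂, hl₂⟩, hg₂f, hb₂⟩, hzg₂⟩ := hz2
  intro g ⟨p, ⟨hgH, hw, hl⟩, hge, hb⟩
  -- walk : p (g → e) ++ revW g₁ p₁ (e → g₁) ++ [(z, g₂)] ++ p₂ (g₂ → f)
  obtain ⟨hrw, hrl⟩ := revW_walk p₁ hg₁H hw₁
  rw [hl₁] at hrw hrl
  refine ⟨p ++ (revW g₁ p₁ ++ ((z, g₂) :: p₂)), ⟨hgH, ?_, ?_⟩, edgeLE_trans hge hef, ?_⟩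
  · refine walkAux_append hw ?_
    rw [hl]
    refine walkAux_append hrw ?_
    rw [hrl]
    exact ⟨hzg₁, hzg₂, hg₂H, hw₂⟩
  · rw [lastEdge_append, hl, lastEdge_append, hrl, lastEdge_cons, hl₂]
  · intro q hq
    simp only [List.mem_append, List.mem_cons] at hq
    rcases hq with hq | (hq | (hq | hq))
    · obtain ⟨h1, h2⟩ := hb q hq
      exact ⟨edgeLE_trans h1 hef, le_trans h2 hxy⟩
    · obtain ⟨h1, h2⟩ := revW_mem p₁ q hq
      constructor
      · rcases h2 with h2 | h2
        · rw [h2]; exact edgeLE_trans hg₁e hef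
        · obtain ⟨a, ha, ha2⟩ := List.mem_map.1 h2
          exact edgeLE_trans (ha2 ▸ (hb₁ a ha).1) hef
      · obtain ⟨a, ha, ha2⟩ := List.mem_map.1 h1
        exact le_trans (ha2 ▸ (hb₁ a ha).2) hxy
    · rw [hq]; exact ⟨hg₂f, le_trans hzx hxy⟩
    · exact hb₂ q hq
end

section
/- Let H be a β-acyclic hypergraph with β-elimination order, let x, y be consecutive vertices in the order with y < x (y the predecessor of x), and let e ∈ H with x ∉ e. Then H_e^x = H_e^y. -/
variable {V : Type*} [LinearOrder V]

/- ### Auxiliary lemmas -/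

lemma edgeLE_total (e f : Finset V) : edgeLE e f ∨ edgeLE f e := by
  by_cases h : e = f
  · exact Or.inl (Or.inl h)
  have hne : (symmDiff e f).Nonempty := by
    rw [Finset.nonempty_iff_ne_empty]
    simpa [symmDiff_eq_bot] using h
  have hmem := Finset.max'_mem _ hne
  rcases Finset.mem_symmDiff.1 hmem with ⟨hmax, _⟩ | ⟨hmax, _⟩
  · right
    right
    have hcomm : symmDiff f e = symmDiff e f := symmDiff_comm f e
    rw [edgeLT, hcomm]
    exact ⟨hne, hmax⟩
  · exact Or.inl (Or.inr ⟨hne, hmax⟩)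

lemma edgeLT_irrefl (e : Finset V) : ¬ edgeLT e e := by
  rintro ⟨hne, -⟩
  simp [symmDiff_self] at hne

lemma edgeLE_antisymm {e f : Finset V} (h1 : edgeLE e f) (h2 : edgeLE f e) : e = f := by
  rcases h1 with rfl | h1
  · rfl
  rcases h2 with rfl | h2
  · rfl
  exfalso
  obtain ⟨hne1, hm1⟩ := h1
  obtain ⟨hne2, hm2⟩ := h2
  have hcomm : symmDiff f e = symmDiff e f := symmDiff_comm f e
  have heq : (symmDiff f e).max' hne2 = (symmDiff e f).max' hne1 := by
    congr 1
  rw [heq] at hm2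
  rcases Finset.mem_symmDiff.1 (Finset.max'_mem _ hne1) with ⟨_, hnf⟩ | ⟨_, hne'⟩
  · exact hnf hm1
  · exact hne' hm2

/-- Key consequence of β-elimination plus the colex order: if `f ≤_H g` and they
share the vertex `v`, then every vertex of `f` above `v` is in `g`. -/
lemma betaElim_high_subset {H : Finset (Finset V)} (hβ : IsBetaElim H)
    {f g : Finset V} (hf : f ∈ H) (hg : g ∈ H) (hfg : edgeLE f g)
    {v u : V} (hvf : v ∈ f) (hvg : v ∈ g) (huf : u ∈ f) (hvu : v < u) : u ∈ g := by
  rcases hfg with rfl | hfg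
  · exact huf
  rcases hβ v f hf g hg hvf hvg with hsub | hsub
  · exact hsub (Finset.mem_filter.2 ⟨huf, hvu⟩)
  · by_contra hug
    obtain ⟨hne, hmax⟩ := hfg
    have humem : u ∈ symmDiff f g := Finset.mem_symmDiff.2 (Or.inl ⟨huf, hug⟩)
    have hle : u ≤ (symmDiff f g).max' hne := Finset.le_max' _ _ humem
    have hmaxf : (symmDiff f g).max' hne ∉ f := by
      rcases Finset.mem_symmDiff.1 (Finset.max'_mem _ hne) with ⟨_, hng⟩ | ⟨_, hnf⟩
      · exact absurd hmax hng
      · exact hnf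
    exact hmaxf (hsub (Finset.mem_filter.2 ⟨hmax, lt_of_lt_of_le hvu hle⟩))

lemma lastEdge_nil (g : Finset V) : lastEdge g ([] : List (V × Finset V)) = g := rfl

lemma lastEdge_cons_s15 (a b : Finset V) (v : V) (t : List (V × Finset V)) :
    lastEdge a ((v, b) :: t) = lastEdge b t :=
  List.getLastD_cons

/-- Normalization: any walk from `h` to `e` whose edges are `≤_H e` may be replaced by a
walk that is no longer, uses vertices and edges from the original walk, and whose first
edge is `≥_H h`. -/
lemma walk_normalize {H : Finset (Finset V)} (hβ : IsBetaElim H) (e : Finset V) :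
    ∀ (n : ℕ) (u : List (V × Finset V)) (h : Finset V), u.length ≤ n → h ∈ H →
      WalkAux H h u → edgeLE h e → (∀ q ∈ u, edgeLE q.2 e) → lastEdge h u = e →
      ∃ u', WalkAux H h u' ∧ lastEdge h u' = e ∧ u'.length ≤ u.length ∧
        (∀ q ∈ u', (∃ r ∈ u, q.1 = r.1) ∧ (∃ r ∈ u, q.2 = r.2)) ∧
        (u' = [] ∨ ∃ w' h' rest, u' = (w', h') :: rest ∧ edgeLE h h') := by
  intro n
  induction n with
  | zero =>
    intro u h hlen _ _ _ _ hlast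
    have hu : u = [] := List.length_eq_zero_iff.1 (Nat.le_zero.1 hlen)
    subst hu
    exact ⟨[], trivial, hlast, le_refl _, by simp, Or.inl rfl⟩
  | succ n IH =>
    intro u h hlen hhH hwalk hhe hedges hlast
    match u, hwalk with
    | [], _ =>
      exact ⟨[], trivial, hlast, le_refl _, by simp, Or.inl rfl⟩
    | (w, h₂) :: t', ⟨hwh, hwh₂, hh₂H, hwalk'⟩ =>
      rcases edgeLE_total h h₂ with hle | hle
      · exact ⟨(w, h₂) :: t', ⟨hwh, hwh₂, hh₂H, hwalk'⟩, hlast, le_refl _,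
          fun q hq => ⟨⟨q, hq, rfl⟩, ⟨q, hq, rfl⟩⟩, Or.inr ⟨w, h₂, t', rfl, hle⟩⟩
      -- `h₂ ≤_H h`
      have hlast' : lastEdge h₂ t' = e := by rw [← lastEdge_cons_s15 h h₂ w t']; exact hlast
      have hedges' : ∀ q ∈ t', edgeLE q.2 e := fun q hq => hedges q (List.mem_cons_of_mem _ hq)
      have hlen' : t'.length ≤ n := by simpa using Nat.lt_succ_iff.1 (lt_of_lt_of_le (by simp) hlen)
      obtain ⟨t'', hw'', hlast'', hlen'', hsub'', hdisj''⟩ :=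
        IH t' h₂ hlen' hh₂H hwalk' (hedges _ (List.mem_cons_self)) hedges' hlast'
      rcases hdisj'' with rfl | ⟨w₂, h₃, rest, rfl, hle₂₃⟩
      · -- `t'' = []`, so `h₂ = e`
        have hh₂e : h₂ = e := hlast''
        refine ⟨[(w, h₂)], ⟨hwh, hwh₂, hh₂H, trivial⟩, ?_, by simp, ?_, ?_⟩
        · rw [lastEdge_cons_s15]; exact hh₂e
        · intro q hq
          simp only [List.mem_singleton] at hq
          subst hq
          exact ⟨⟨(w, h₂), List.mem_cons_self, rfl⟩, ⟨(w, h₂), List.mem_cons_self, rfl⟩⟩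
        · exact Or.inr ⟨w, h₂, [], rfl, hh₂e ▸ hhe⟩
      · -- `t'' = (w₂, h₃) :: rest` with `h₂ ≤_H h₃`
        obtain ⟨hw₂h₂, hw₂h₃, hh₃H, hwrest⟩ := hw''
      -- new first vertex in `h ∩ h₃`
        have hkey : ∃ w', w' ∈ h ∧ w' ∈ h₃ ∧ (w' = w ∨ w' = w₂) := by
          rcases le_or_gt w₂ w with hww | hww
          · refine ⟨w, hwh, ?_, Or.inl rfl⟩
            rcases eq_or_lt_of_le hww with rfl | hlt
            · exact hw₂h₃
            · exact betaElim_high_subset hβ hh₂H hh₃H hle₂₃ hw₂h₂ hw₂h₃ hwh₂ hlt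
          · refine ⟨w₂, ?_, hw₂h₃, Or.inr rfl⟩
            exact betaElim_high_subset hβ hh₂H hhH hle hwh₂ hwh hw₂h₂ hww
        obtain ⟨w', hw'h, hw'h₃, hw'or⟩ := hkey
        have hlastrest : lastEdge h₃ rest = e := by
          rw [← lastEdge_cons_s15 h₂ h₃ w₂ rest]; exact hlast''
        have hsubrest : ∀ q ∈ rest, (∃ r ∈ t', q.1 = r.1) ∧ (∃ r ∈ t', q.2 = r.2) :=
          fun q hq => hsub'' q (List.mem_cons_of_mem _ hq)
        have hlenrest : ((w', h₃) :: rest).length ≤ n := by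
          have : ((w₂, h₃) :: rest).length ≤ t'.length := hlen''
          simp only [List.length_cons] at this ⊢
          exact le_trans this hlen'
        have hedgesnew : ∀ q ∈ (w', h₃) :: rest, edgeLE q.2 e := by
          intro q hq
          rcases List.mem_cons.1 hq with rfl | hq
          · obtain ⟨r, hr, hre⟩ := (hsub'' (w₂, h₃) (List.mem_cons_self)).2
            exact hre ▸ hedges' r hr
          · obtain ⟨r, hr, hre⟩ := (hsubrest q hq).2
            exact hre ▸ hedges' r hr
        have hlastnew : lastEdge h ((w', h₃) :: rest) = e := by
          rw [lastEdge_cons_s15]; exact hlastrest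
        obtain ⟨u', hwu', hlastu', hlenu', hsubu', hdisju'⟩ :=
          IH ((w', h₃) :: rest) h hlenrest hhH ⟨hw'h, hw'h₃, hh₃H, hwrest⟩ hhe hedgesnew hlastnew
        refine ⟨u', hwu', hlastu', ?_, ?_, hdisju'⟩
        · refine le_trans hlenu' ?_
          simp only [List.length_cons]
          exact le_trans (by simpa using hlen'') (Nat.le_succ _)
        · intro q hq
          obtain ⟨⟨r, hr, hr1⟩, ⟨s, hs, hs2⟩⟩ := hsubu' q hq
          constructor
          · rcases List.mem_cons.1 hr with rfl | hr
            · rcases hw'or with hh | hh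
              · exact ⟨(w, h₂), List.mem_cons_self, hr1.trans hh⟩
              · obtain ⟨r', hr', hre'⟩ := (hsub'' (w₂, h₃) (List.mem_cons_self)).1
                exact ⟨r', List.mem_cons_of_mem _ hr', (hr1.trans hh).trans hre'⟩
            · obtain ⟨r', hr', hre'⟩ := (hsubrest r hr).1
              exact ⟨r', List.mem_cons_of_mem _ hr', hr1.trans hre'⟩
          · rcases List.mem_cons.1 hs with rfl | hs
            · obtain ⟨r', hr', hre'⟩ := (hsub'' (w₂, h₃) (List.mem_cons_self)).2
              exact ⟨r', List.mem_cons_of_mem _ hr', hs2.trans hre'⟩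
            · obtain ⟨r', hr', hre'⟩ := (hsubrest s hs).2
              exact ⟨r', List.mem_cons_of_mem _ hr', hs2.trans hre'⟩

/-- Core lemma: if `z ∈ g` and there is a walk from `g` to `e` all of whose edges are
`≤_H e` and all of whose vertices are `< z`, then `z ∈ e`. -/
lemma walk_high_mem {H : Finset (Finset V)} (hβ : IsBetaElim H) (e : Finset V) :
    ∀ (n : ℕ) (p : List (V × Finset V)) (g : Finset V) (z : V), p.length ≤ n → g ∈ H →
      WalkAux H g p → edgeLE g e → (∀ q ∈ p, edgeLE q.2 e) → lastEdge g p = e →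
      z ∈ g → (∀ q ∈ p, q.1 < z) → z ∈ e := by
  intro n
  induction n with
  | zero =>
    intro p g z hlen _ _ _ _ hlast hzg _
    have hp : p = [] := List.length_eq_zero_iff.1 (Nat.le_zero.1 hlen)
    subst hp
    exact hlast ▸ hzg
  | succ n IH =>
    intro p g z hlen hgH hwalk hge hedges hlast hzg hvert
    match p, hwalk with
    | [], _ => exact hlast ▸ hzg
    | (v, h) :: t, ⟨hvg, hvh, hhH, hwalk'⟩ =>
      have hlast' : lastEdge h t = e := by rw [← lastEdge_cons_s15 g h v t]; exact hlast
      have hedges' : ∀ q ∈ t, edgeLE q.2 e := fun q hq => hedges q (List.mem_cons_of_mem _ hq)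
      have hhe : edgeLE h e := hedges _ (List.mem_cons_self)
      have hvz : v < z := hvert _ (List.mem_cons_self)
      have hvert' : ∀ q ∈ t, q.1 < z := fun q hq => hvert q (List.mem_cons_of_mem _ hq)
      have hlen' : t.length ≤ n := by simpa using Nat.lt_succ_iff.1 (lt_of_lt_of_le (by simp) hlen)
      rcases edgeLE_total g h with hle | hle
      · -- `g ≤_H h`: `z` moves into `h`
        have hzh : z ∈ h := betaElim_high_subset hβ hgH hhH hle hvg hvh hzg hvz
        exact IH t h z hlen' hhH hwalk' hhe hedges' hlast' hzh hvert'
      -- `h ≤_H g`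
      obtain ⟨t', hwt', hlastt', hlent', hsubt', hdisjt'⟩ :=
        walk_normalize hβ e t.length t h (le_refl _) hhH hwalk' hhe hedges' hlast'
      rcases hdisjt' with rfl | ⟨w, h', rest, rfl, hlehh'⟩
      · -- `t' = []`, so `h = e`, so `g = e` by antisymmetry
        have hhe' : h = e := hlastt'
        subst hhe'
        have : g = h := edgeLE_antisymm hge hle
        exact this ▸ hzg
      · obtain ⟨hwh, hwh', hh'H, hwrest⟩ := hwt'
        have hwz : w < z := by
          obtain ⟨r, hr, hre⟩ := (hsubt' (w, h') (List.mem_cons_self)).1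
          have := hvert' r hr
          rw [← hre] at this
          exact this
        -- new connecting vertex in `g ∩ h'`
        have hkey : ∃ v', v' ∈ g ∧ v' ∈ h' ∧ v' < z := by
          rcases le_or_gt w v with hwv | hwv
          · refine ⟨v, hvg, ?_, hvz⟩
            rcases eq_or_lt_of_le hwv with rfl | hlt
            · exact hwh'
            · exact betaElim_high_subset hβ hhH hh'H hlehh' hwh hwh' hvh hlt
          · exact ⟨w, betaElim_high_subset hβ hhH hgH hle hvh hvg hwh hwv, hwh', hwz⟩
        obtain ⟨v', hv'g, hv'h', hv'z⟩ := hkey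
        have hlastrest : lastEdge h' rest = e := by
          rw [← lastEdge_cons_s15 h h' w rest]; exact hlastt'
        have hsubrest : ∀ q ∈ rest, (∃ r ∈ t, q.1 = r.1) ∧ (∃ r ∈ t, q.2 = r.2) :=
          fun q hq => hsubt' q (List.mem_cons_of_mem _ hq)
        have hlennew : ((v', h') :: rest).length ≤ n := by
          have : ((w, h') :: rest).length ≤ t.length := hlent'
          simp only [List.length_cons] at this ⊢
          exact le_trans this hlen'
        have hedgesnew : ∀ q ∈ (v', h') :: rest, edgeLE q.2 e := by
          intro q hq
          rcases List.mem_cons.1 hq with rfl | hq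
          · obtain ⟨r, hr, hre⟩ := (hsubt' (w, h') (List.mem_cons_self)).2
            exact hre ▸ hedges' r hr
          · obtain ⟨r, hr, hre⟩ := (hsubrest q hq).2
            exact hre ▸ hedges' r hr
        have hvertnew : ∀ q ∈ (v', h') :: rest, q.1 < z := by
          intro q hq
          rcases List.mem_cons.1 hq with rfl | hq
          · exact hv'z
          · obtain ⟨r, hr, hre⟩ := (hsubrest q hq).1
            exact hre ▸ hvert' r hr
        have hlastnew : lastEdge g ((v', h') :: rest) = e := by
          rw [lastEdge_cons_s15]; exact hlastrest
        exact IH ((v', h') :: rest) g z hlennew hgH ⟨hv'g, hv'h', hh'H, hwrest⟩ hge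
          hedgesnew hlastnew hzg hvertnew

theorem hex_skip_vertex {V : Type*} [LinearOrder V] (H : Finset (Finset V))
    (hβ : IsBetaElim H) (x y : V) (hyx : y < x)
    (hpred : ∀ z : V, z < x → z ≤ y)
    (e : Finset V) (he : e ∈ H) (hxe : x ∉ e) :
    ∀ f, memHex H e x f ↔ memHex H e y f := by
  intro f
  constructor
  · rintro ⟨p, ⟨hfH, hwalk, hlast⟩, hfe, hprop⟩
    -- no vertex of the walk equals `x`
    have hnox : ∀ (q : List (V × Finset V)) (g : Finset V), g ∈ H → WalkAux H g q →
        lastEdge g q = e → (∀ r ∈ q, edgeLE r.2 e ∧ r.1 ≤ x) → ∀ r ∈ q, r.1 ≠ x := by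
      intro q
      induction q with
      | nil => intro g _ _ _ _ r hr; exact absurd hr List.not_mem_nil
      | cons a t IHq =>
        obtain ⟨v, h⟩ := a
        rintro g hgH ⟨hvg, hvh, hhH, hwalk'⟩ hlastq hpropq
        have hlast' : lastEdge h t = e := by rw [← lastEdge_cons_s15 g h v t]; exact hlastq
        have hprop' : ∀ r ∈ t, edgeLE r.2 e ∧ r.1 ≤ x :=
          fun r hr => hpropq r (List.mem_cons_of_mem _ hr)
        have htail : ∀ r ∈ t, r.1 ≠ x := IHq h hhH hwalk' hlast' hprop'
        intro r hr
        rcases List.mem_cons.1 hr with rfl | hr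
        · -- head: suppose `v = x`
          intro hvx
          subst hvx
          have hvert : ∀ r ∈ t, r.1 < v := by
            intro r hr
            exact lt_of_le_of_ne (hprop' r hr).2 (htail r hr)
          have : v ∈ e := walk_high_mem hβ e t.length t h v (le_refl _) hhH hwalk'
            (hpropq (v, h) (List.mem_cons_self)).1
            (fun q hq => (hprop' q hq).1) hlast' hvh hvert
          exact hxe this
        · exact htail r hr
    refine ⟨p, ⟨hfH, hwalk, hlast⟩, hfe, fun q hq => ⟨(hprop q hq).1, ?_⟩⟩
    have hne := hnox p f hfH hwalk hlast hprop q hq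
    exact hpred _ (lt_of_le_of_ne (hprop q hq).2 hne)
  · rintro ⟨p, hw, hfe, hprop⟩
    exact ⟨p, hw, hfe, fun q hq => ⟨(hprop q hq).1, le_trans (hprop q hq).2 hyx.le⟩⟩
end
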